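/- arXiv:2506.15782 — 6 statements merged into one kernel-verified Lean document; each statement's English description precedes it below -/
import Mathlib

section
/- Let H be an RKHS on a state space X with kernel 𝔎, and let F : X → X. If F is a bijection and 𝔎(F(x), F(y)) = 𝔎(x, y) for all x, y ∈ X, then the Koopman operator K_F g = g ∘ F extends to a unitary operator on H. Conversely, if K_F is unitary then 𝔎(F(x), F(y)) = 𝔎(x, y) for all x, y ∈ X. -/
open Finsupp in
/-- If `G` preserves the kernel inner products, the map `K x ↦ K (G x)` extends to a linear
isometry of `H`. -/
lemma koopman_aux
    (X : Type*) (H : Type*) [NormedAddCommGroup H] [InnerProductSpace ℂ H] [CompleteSpace H]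
    (K : X → H)
    (hdense : Dense ((Submodule.span ℂ (Set.range K) : Submodule ℂ H) : Set H))
    (G : X → X)
    (hG : ∀ x y : X, (inner ℂ (K (G x)) (K (G y)) : ℂ) = inner ℂ (K x) (K y)) :
    ∃ W : H →ₗᵢ[ℂ] H, ∀ x, W (K x) = K (G x) := by
  set M : (X →₀ ℂ) →ₗ[ℂ] H := Finsupp.linearCombination ℂ K with hM
  set L : (X →₀ ℂ) →ₗ[ℂ] H := Finsupp.linearCombination ℂ (fun x => K (G x)) with hL
  have key : ∀ l l' : X →₀ ℂ, (inner ℂ (L l) (L l') : ℂ) = inner ℂ (M l) (M l') := by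
    intro l l'
    simp only [hM, hL, Finsupp.linearCombination_apply, Finsupp.sum]
    rw [sum_inner, sum_inner]
    refine Finset.sum_congr rfl fun x _ => ?_
    rw [inner_sum, inner_sum]
    refine Finset.sum_congr rfl fun y _ => ?_
    rw [inner_smul_left, inner_smul_left, inner_smul_right, inner_smul_right, hG]
  have hker : LinearMap.ker M ≤ LinearMap.ker L := by
    intro l hl
    rw [LinearMap.mem_ker] at hl ⊢
    have h0 : (inner ℂ (L l) (L l) : ℂ) = 0 := by rw [key, hl, inner_zero_right]
    exact inner_self_eq_zero.mp h0
  set S : Submodule ℂ H := LinearMap.range M with hS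
  have hSspan : S = Submodule.span ℂ (Set.range K) := by
    rw [hS, hM, Finsupp.range_linearCombination]
  set T : S →ₗ[ℂ] H :=
    ((LinearMap.ker M).liftQ L hker).comp (M.quotKerEquivRange.symm : S →ₗ[ℂ] _) with hT
  have hTapp : ∀ l : X →₀ ℂ, T ⟨M l, LinearMap.mem_range_self M l⟩ = L l := by
    intro l
    have h1 : M.quotKerEquivRange (Submodule.Quotient.mk l) = ⟨M l, LinearMap.mem_range_self M l⟩ :=
      Subtype.ext (M.quotKerEquivRange_apply_mk l)
    have h2 : M.quotKerEquivRange.symm ⟨M l, LinearMap.mem_range_self M l⟩ =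
        Submodule.Quotient.mk l := by
      rw [← h1, LinearEquiv.symm_apply_apply]
    simp only [hT, LinearMap.comp_apply, LinearEquiv.coe_coe, h2]
    rfl
  have hTinner : ∀ v w : S, (inner ℂ (T v) (T w) : ℂ) = inner ℂ (v : H) (w : H) := by
    intro v w
    obtain ⟨l, hl⟩ := v.2
    obtain ⟨l', hl'⟩ := w.2
    have hv : v = ⟨M l, LinearMap.mem_range_self M l⟩ := Subtype.ext hl.symm
    have hw : w = ⟨M l', LinearMap.mem_range_self M l'⟩ := Subtype.ext hl'.symm
    rw [hv, hw, hTapp, hTapp, key]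
  have hTnorm : ∀ v : S, ‖T v‖ = ‖v‖ :=
    (LinearMap.norm_map_iff_inner_map_map T).mpr hTinner
  set Ti : S →ₗᵢ[ℂ] H := ⟨T, hTnorm⟩ with hTi
  have hDS : Dense (S : Set H) := by rw [hSspan]; exact hdense
  set W0 : H →L[ℂ] H := Ti.toContinuousLinearMap.extend (Submodule.subtypeL S)
    with hW0
  have hW0eq : ∀ v : S, W0 v = Ti v := fun v => ContinuousLinearMap.extend_eq (f := Ti.toContinuousLinearMap) (e := Submodule.subtypeL S) (h_dense := hDS.denseRange_val) (h_e := isUniformEmbedding_subtype_val.isUniformInducing) (x := v)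
  have hnorm : ∀ h : H, ‖W0 h‖ = ‖h‖ := by
    intro h
    have hc : IsClosed {h : H | ‖W0 h‖ = ‖h‖} :=
      isClosed_eq (W0.continuous.norm) continuous_norm
    have hsub : (S : Set H) ⊆ {h : H | ‖W0 h‖ = ‖h‖} := by
      rintro v hv
      have := hW0eq ⟨v, hv⟩
      simp only [Set.mem_setOf_eq, Submodule.subtypeL_apply] at this ⊢
      rw [this]
      exact Ti.norm_map ⟨v, hv⟩
    have hmem : h ∈ closure (S : Set H) := hDS h
    exact hc.closure_subset_iff.mpr hsub hmem
  refine ⟨⟨(W0 : H →ₗ[ℂ] H), hnorm⟩, fun x => ?_⟩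
  have hKx : K x = M (Finsupp.single x 1) := by
    simp [hM, Finsupp.linearCombination_single]
  have hmem : K x ∈ S := by rw [hKx]; exact LinearMap.mem_range_self M _
  show W0 (K x) = K (G x)
  have := hW0eq ⟨K x, hmem⟩
  simp only [Submodule.subtypeL_apply] at this
  rw [this]
  show T ⟨K x, hmem⟩ = K (G x)
  have h1 : (⟨K x, hmem⟩ : S) = ⟨M (Finsupp.single x 1), LinearMap.mem_range_self M _⟩ :=
    Subtype.ext hKx
  rw [h1, hTapp]
  simp [hL, Finsupp.linearCombination_single]

/-- Let `H` be an RKHS on `X` with kernel functions `K x`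
(kernel `𝔎(x,y) = ⟪K x, K y⟫`) and `F : X → X`. If `F` is a bijection and
`𝔎(F x, F y) = 𝔎(x, y)` for all `x, y`, then the Koopman operator `g ↦ g ∘ F` extends to a
unitary operator on `H`. Conversely, if the Koopman operator is unitary then
`𝔎(F x, F y) = 𝔎(x, y)` for all `x, y`. -/
theorem koopman_unitary_iff_kernel_invariant
    (X : Type*) (H : Type*) [NormedAddCommGroup H] [InnerProductSpace ℂ H] [CompleteSpace H]
    (toFun : H →ₗ[ℂ] (X → ℂ)) (hinj : Function.Injective toFun)
    (K : X → H)
    (hrep : ∀ (f : H) (x : X), toFun f x = (inner ℂ (K x) f : ℂ))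
    (F : X → X) :
    (Function.Bijective F →
      (∀ x y : X, (inner ℂ (K (F x)) (K (F y)) : ℂ) = inner ℂ (K x) (K y)) →
      ∃ U : H ≃ₗᵢ[ℂ] H, ∀ f : H, toFun (U f) = toFun f ∘ F) ∧
    (∀ U : H ≃ₗᵢ[ℂ] H, (∀ f : H, toFun (U f) = toFun f ∘ F) →
      ∀ x y : X, (inner ℂ (K (F x)) (K (F y)) : ℂ) = inner ℂ (K x) (K y)) := by
  have hdense : Dense ((Submodule.span ℂ (Set.range K) : Submodule ℂ H) : Set H) := by
    rw [Submodule.dense_iff_topologicalClosure_eq_top,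
      Submodule.topologicalClosure_eq_top_iff]
    rw [Submodule.eq_bot_iff]
    intro f hf
    apply hinj
    rw [map_zero]
    funext x
    rw [hrep]
    have := hf (K x) (Submodule.subset_span ⟨x, rfl⟩)
    simpa using this
  constructor
  · intro hF hK
    obtain ⟨W, hW⟩ := koopman_aux X H K hdense F hK
    set e := Equiv.ofBijective F hF with he
    have hK' : ∀ x y : X, (inner ℂ (K (e.symm x)) (K (e.symm y)) : ℂ) = inner ℂ (K x) (K y) := by
      intro x y
      have := hK (e.symm x) (e.symm y)
      rw [show F (e.symm x) = x from e.apply_symm_apply x,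
        show F (e.symm y) = y from e.apply_symm_apply y] at this
      exact this.symm
    obtain ⟨W', hW'⟩ := koopman_aux X H K hdense (fun x => e.symm x) hK'
    have hcomp : W.toContinuousLinearMap.comp W'.toContinuousLinearMap =
        ContinuousLinearMap.id ℂ H := by
      apply ContinuousLinearMap.ext_on hdense
      rintro v ⟨x, rfl⟩
      simp only [ContinuousLinearMap.comp_apply, LinearIsometry.coe_toContinuousLinearMap,
        ContinuousLinearMap.id_apply]
      rw [hW' x, hW (e.symm x)]
      congr 1
      exact e.apply_symm_apply x
    have hsurj : Function.Surjective W := by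
      intro h
      refine ⟨W' h, ?_⟩
      have := congrFun (congrArg (fun (f : H →L[ℂ] H) => (f : H → H)) hcomp) h
      simpa using this
    set V := LinearIsometryEquiv.ofSurjective W hsurj with hV
    have hVapp : ∀ x, V (K x) = K (F x) := by
      intro x
      show (V : H → H) (K x) = K (F x)
      rw [LinearIsometryEquiv.coe_ofSurjective]
      exact hW x
    refine ⟨V.symm, fun f => ?_⟩
    funext x
    rw [Function.comp_apply, hrep, hrep]
    calc (inner ℂ (K x) (V.symm f) : ℂ) = inner ℂ (V (K x)) (V (V.symm f)) :=
          (V.inner_map_map _ _).symm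
      _ = inner ℂ (K (F x)) f := by rw [hVapp, V.apply_symm_apply]
  · intro U hU x y
    have hKey : ∀ z : X, K (F z) = U.symm (K z) := by
      intro z
      apply ext_inner_right ℂ
      intro f
      have h1 : toFun (U f) z = toFun f (F z) := by rw [hU f]; rfl
      rw [hrep, hrep] at h1
      calc (inner ℂ (K (F z)) f : ℂ) = inner ℂ (K z) (U f) := h1.symm
        _ = inner ℂ (U (U.symm (K z))) (U f) := by rw [U.apply_symm_apply]
        _ = inner ℂ (U.symm (K z)) f := U.inner_map_map _ _
    rw [hKey x, hKey y, U.symm.inner_map_map]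
end

section
/- Let H be an RKHS on X with kernel 𝔎 and F : X → X such that the Koopman operator K_F is bounded on H. Then K_F is self-adjoint if and only if 𝔎(x, F(y)) = 𝔎(F(x), y) for all x, y ∈ X. -/
/-- Let `H` be an RKHS on `X` with kernel functions `K x`
(kernel `𝔎(x,y) = ⟪K x, K y⟫`) and `F : X → X` such that the Koopman operator
`U g = g ∘ F` is bounded on `H`. Then `U` is self-adjoint if and only if
`𝔎(x, F y) = 𝔎(F x, y)` for all `x, y ∈ X`. -/
theorem koopman_selfAdjoint_iff_kernel_symmetry
    (X : Type*) (H : Type*) [NormedAddCommGroup H] [InnerProductSpace ℂ H] [CompleteSpace H]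
    (toFun : H →ₗ[ℂ] (X → ℂ)) (hinj : Function.Injective toFun)
    (K : X → H)
    (hrep : ∀ (f : H) (x : X), toFun f x = (inner ℂ (K x) f : ℂ))
    (F : X → X)
    (U : H →L[ℂ] H)
    (hU : ∀ f : H, toFun (U f) = toFun f ∘ F) :
    IsSelfAdjoint U ↔
      ∀ x y : X, (inner ℂ (K x) (K (F y)) : ℂ) = inner ℂ (K (F x)) (K y) := by
  have key : ∀ (f : H) (x : X), (inner ℂ (K x) (U f) : ℂ) = inner ℂ (K (F x)) f := by
    intro f x
    rw [← hrep, hU, Function.comp_apply, hrep]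
  constructor
  · intro hsa x y
    have hadj : ContinuousLinearMap.adjoint U = U :=
      ContinuousLinearMap.isSelfAdjoint_iff'.mp hsa
    have hl : (inner ℂ (U (K x)) (K y) : ℂ) = inner ℂ (K x) (K (F y)) := by
      rw [← inner_conj_symm (U (K x)) (K y), key (K x) y, inner_conj_symm]
    have hself : (inner ℂ (U (K x)) (K y) : ℂ) = inner ℂ (K x) (U (K y)) := by
      conv_lhs => rw [← hadj]
      rw [ContinuousLinearMap.adjoint_inner_left]
    rw [← hl, hself, key (K y) x]
  · intro hsym
    rw [ContinuousLinearMap.isSelfAdjoint_iff']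
    have hUK : ∀ x : X, U (K x) = K (F x) := by
      intro x
      apply hinj
      funext y
      rw [hrep, hrep, key (K x) y, ← inner_conj_symm (K (F y)) (K x), hsym,
        inner_conj_symm]
    ext f
    apply hinj
    funext x
    rw [hrep, hrep, ContinuousLinearMap.adjoint_inner_right, hUK, key]
end

section
/- Let H be an RKHS on X with radial kernel 𝔎(x, y) = 𝔎₀(‖x − y‖) where 𝔎₀ is injective, and let F : X → X be a bijection such that the Koopman operator K_F is defined. Then K_F is unitary if and only if F is an isometry, i.e., ‖F(x) − F(y)‖ = ‖x − y‖ for all x, y ∈ X. -/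
/-- Let `X` be a subset of a normed space `E`, `H` an RKHS on `X` whose
kernel is radial, `𝔎(x,y) = 𝔎₀(‖x − y‖)` with `𝔎₀` injective on `[0,∞)`, and `F : X → X`
a bijection. Then the Koopman operator `g ↦ g ∘ F` is unitary if and only if `F` is an
isometry, i.e. `‖F x − F y‖ = ‖x − y‖` for all `x, y ∈ X`. -/
theorem koopman_unitary_iff_isometry_radial_kernel
    (E : Type*) [NormedAddCommGroup E] (X : Set E)
    (H : Type*) [NormedAddCommGroup H] [InnerProductSpace ℂ H] [CompleteSpace H]
    (toFun : H →ₗ[ℂ] (X → ℂ)) (hinj : Function.Injective toFun)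
    (K : X → H)
    (hrep : ∀ (f : H) (x : X), toFun f x = (inner ℂ (K x) f : ℂ))
    (K₀ : ℝ → ℝ)
    (hK₀inj : ∀ a b : ℝ, 0 ≤ a → 0 ≤ b → K₀ a = K₀ b → a = b)
    (hker : ∀ x y : X, (inner ℂ (K x) (K y) : ℂ) = (K₀ ‖(x : E) - (y : E)‖ : ℝ))
    (F : X → X) (hF : Function.Bijective F) :
    (∃ U : H ≃ₗᵢ[ℂ] H, ∀ f : H, toFun (U f) = toFun f ∘ F) ↔
      ∀ x y : X, ‖(F x : E) - (F y : E)‖ = ‖(x : E) - (y : E)‖ := by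
  constructor
  · rintro ⟨U, hU⟩ x y
    have key : ∀ z : X, U.symm (K z) = K (F z) := by
      intro z
      apply ext_inner_right ℂ
      intro f
      have h1 : (inner ℂ (K z) (U f) : ℂ) = inner ℂ (K (F z)) f := by
        have h2 := hrep (U f) z
        rw [hU f] at h2
        simpa [hrep f (F z)] using h2.symm
      calc (inner ℂ (U.symm (K z)) f : ℂ)
          = inner ℂ (U (U.symm (K z))) (U f) := (U.inner_map_map _ _).symm
        _ = inner ℂ (K z) (U f) := by rw [U.apply_symm_apply]
        _ = inner ℂ (K (F z)) f := h1
    have h2 : ((K₀ ‖(F x : E) - (F y : E)‖ : ℝ) : ℂ) = (K₀ ‖(x : E) - (y : E)‖ : ℝ) := by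
      rw [← hker, ← hker, ← key x, ← key y, LinearIsometryEquiv.inner_map_map]
    exact hK₀inj _ _ (norm_nonneg _) (norm_nonneg _) (by exact_mod_cast h2)
  · intro hiso
    -- density of the span of the kernel functions
    have hdense : Dense ((Submodule.span ℂ (Set.range K) : Submodule ℂ H) : Set H) := by
      have htop : (Submodule.span ℂ (Set.range K)).topologicalClosure = ⊤ := by
        rw [Submodule.topologicalClosure_eq_top_iff, Submodule.eq_bot_iff]
        intro g hg
        apply hinj
        rw [map_zero]
        funext z
        have : (inner ℂ (K z) g : ℂ) = 0 :=
          hg (K z) (Submodule.subset_span ⟨z, rfl⟩)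
        simp [hrep g z, this]
      rw [← Submodule.dense_iff_topologicalClosure_eq_top] at htop
      exact htop
    -- a general construction of the Koopman-type operator on H
    have mk : ∀ f' : X → X,
        (∀ x y : X, (inner ℂ (K (f' x)) (K (f' y)) : ℂ) = inner ℂ (K x) (K y)) →
        ∃ T : H →L[ℂ] H, (∀ z : X, T (K z) = K (f' z)) ∧ ∀ v : H, ‖T v‖ = ‖v‖ := by
      intro f' hkerF
      set S : (X →₀ ℂ) →ₗ[ℂ] H := Finsupp.linearCombination ℂ K with hS
      set S' : (X →₀ ℂ) →ₗ[ℂ] H := Finsupp.linearCombination ℂ (K ∘ f') with hS'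
      have bil : ∀ a b : X →₀ ℂ, (inner ℂ (S' a) (S' b) : ℂ) = inner ℂ (S a) (S b) := by
        intro a b
        simp only [hS, hS', Finsupp.linearCombination_apply, Finsupp.sum, sum_inner,
          inner_sum, inner_smul_left, inner_smul_right, Function.comp_apply, hkerF]
      have hle : LinearMap.ker S ≤ LinearMap.ker S' := by
        intro a ha
        rw [LinearMap.mem_ker] at ha ⊢
        have : (inner ℂ (S' a) (S' a) : ℂ) = 0 := by rw [bil, ha, inner_zero_right]
        exact inner_self_eq_zero.mp this
      -- the induced map on the range of S
      set ψ : ((X →₀ ℂ) ⧸ LinearMap.ker S) →ₗ[ℂ] H := (LinearMap.ker S).liftQ S' hle with hψ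
      set φ : LinearMap.range S →ₗ[ℂ] H := ψ ∘ₗ (S.quotKerEquivRange.symm : LinearMap.range S →ₗ[ℂ] _) with hφdef
      have hφ : ∀ a : X →₀ ℂ, φ ⟨S a, LinearMap.mem_range_self S a⟩ = S' a := by
        intro a
        have h1 : S.quotKerEquivRange.symm ⟨S a, LinearMap.mem_range_self S a⟩
            = Submodule.Quotient.mk a := by
          rw [LinearEquiv.symm_apply_eq]
          exact Subtype.ext (S.quotKerEquivRange_apply_mk a).symm
        simp only [hφdef, LinearMap.comp_apply, LinearEquiv.coe_coe, h1, hψ,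
          Submodule.liftQ_apply]
      have hφinner : ∀ u v : LinearMap.range S, (inner ℂ (φ u) (φ v) : ℂ) = inner ℂ u v := by
        rintro ⟨u, a, rfl⟩ ⟨v, b, rfl⟩
        rw [hφ a, hφ b, bil, Submodule.coe_inner]
      set Liso : LinearMap.range S →ₗᵢ[ℂ] H := φ.isometryOfInner hφinner with hLiso
      -- extend along the (isometric, dense-range) inclusion
      set e : LinearMap.range S →L[ℂ] H := (LinearMap.range S).subtypeL with he
      have hrange : Set.range e = (Submodule.span ℂ (Set.range K) : Submodule ℂ H) := by
        have h0 : Set.range e = (LinearMap.range S : Set H) := by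
          ext v
          constructor
          · rintro ⟨u, rfl⟩; exact u.2
          · intro hv; exact ⟨⟨v, hv⟩, rfl⟩
        rw [h0, hS, Finsupp.range_linearCombination]
      have hedense : DenseRange e := by
        rw [DenseRange, hrange]; exact hdense
      have heui : IsUniformInducing e := by
        apply Isometry.isUniformInducing
        exact fun u v => by simp [he, edist_dist, Subtype.dist_eq]
      set T : H →L[ℂ] H := Liso.toContinuousLinearMap.extend e with hT
      have hTe : ∀ u : LinearMap.range S, T (e u) = Liso u := by
        intro u
        exact ContinuousLinearMap.extend_eq _ hedense heui u
      have hTK : ∀ z : X, T (K z) = K (f' z) := by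
        intro z
        have hmem : K z ∈ LinearMap.range S :=
          ⟨Finsupp.single z 1, by simp [hS]⟩
        have h1 : T (K z) = Liso ⟨K z, hmem⟩ := hTe ⟨K z, hmem⟩
        have h2 : Liso ⟨K z, hmem⟩ = φ ⟨K z, hmem⟩ := rfl
        have h3 : (⟨K z, hmem⟩ : LinearMap.range S)
            = ⟨S (Finsupp.single z 1), LinearMap.mem_range_self S _⟩ := by
          apply Subtype.ext; simp [hS]
        rw [h1, h2, h3, hφ]
        simp [hS']
      have hTnorm : ∀ v : H, ‖T v‖ = ‖v‖ := by
        have hcl : IsClosed {v : H | ‖T v‖ = ‖v‖} :=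
          isClosed_eq (T.continuous.norm) continuous_norm
        intro v
        refine hedense.induction_on v hcl ?_
        intro u
        show ‖T (e u)‖ = ‖e u‖
        rw [hTe u, Liso.norm_map]
        rfl
      exact ⟨T, hTK, hTnorm⟩
    -- apply to F and its inverse
    set Fe := Equiv.ofBijective F hF with hFe
    have hkerF : ∀ x y : X, (inner ℂ (K (F x)) (K (F y)) : ℂ) = inner ℂ (K x) (K y) := by
      intro x y; rw [hker, hker, hiso]
    have hkerG : ∀ x y : X, (inner ℂ (K (Fe.symm x)) (K (Fe.symm y)) : ℂ) = inner ℂ (K x) (K y) := by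
      intro x y
      have h1 := hkerF (Fe.symm x) (Fe.symm y)
      have e1 : F (Fe.symm x) = x := Equiv.ofBijective_apply_symm_apply F hF x
      have e2 : F (Fe.symm y) = y := Equiv.ofBijective_apply_symm_apply F hF y
      rw [e1, e2] at h1
      exact h1.symm
    obtain ⟨T, hTK, hTnorm⟩ := mk F hkerF
    obtain ⟨T', hT'K, hT'norm⟩ := mk Fe.symm hkerG
    -- the two operators are inverse to each other
    have hdense' : Dense (Submodule.span ℂ (Set.range K) : Set H) := hdense
    have hcomp : ∀ (A : H →L[ℂ] H), (∀ z : X, A (K z) = K z) → A = ContinuousLinearMap.id ℂ H := by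
      intro A hA
      apply ContinuousLinearMap.ext_on hdense'
      rintro _ ⟨z, rfl⟩
      simpa using hA z
    have h1 : T.comp T' = ContinuousLinearMap.id ℂ H := by
      apply hcomp
      intro z
      simp only [ContinuousLinearMap.comp_apply, hT'K, hTK]
      exact congrArg K (Equiv.ofBijective_apply_symm_apply F hF z)
    have h2 : T'.comp T = ContinuousLinearMap.id ℂ H := by
      apply hcomp
      intro z
      simp only [ContinuousLinearMap.comp_apply, hTK, hT'K]
      exact congrArg K (Fe.symm_apply_apply z)
    -- build the unitary
    set Teq : H ≃ₗᵢ[ℂ] H :=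
      { toLinearEquiv := LinearEquiv.ofLinear (T : H →ₗ[ℂ] H) (T' : H →ₗ[ℂ] H)
          (by ext v; exact DFunLike.congr_fun (congrArg ContinuousLinearMap.toLinearMap h1) v)
          (by ext v; exact DFunLike.congr_fun (congrArg ContinuousLinearMap.toLinearMap h2) v)
        norm_map' := hTnorm } with hTeq
    have hTeqK : ∀ z : X, Teq (K z) = K (F z) := fun z => hTK z
    refine ⟨Teq.symm, ?_⟩
    intro f
    funext z
    show toFun (Teq.symm f) z = toFun f (F z)
    rw [hrep, hrep]
    calc (inner ℂ (K z) (Teq.symm f) : ℂ)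
        = inner ℂ (Teq (K z)) (Teq (Teq.symm f)) := (Teq.inner_map_map _ _).symm
      _ = inner ℂ (K (F z)) f := by rw [Teq.apply_symm_apply, hTeqK]
end

section
/- Let K* be a bounded operator on an RKHS H, x₀ ∈ X, and suppose {(λᵢ, ψᵢ)}_{i=1}^{m} satisfy ‖(K* − λᵢI)ψᵢ‖ ≤ ε for each i, and coefficients cᵢ ∈ ℂ satisfy ‖𝔎_{x₀} − Σᵢ cᵢψᵢ‖ ≤ δ. Then for any g ∈ H and n ∈ ℕ, |g(Fⁿ(x₀)) − Σᵢ c̄ᵢ λ̄ᵢⁿ ⟨g, ψᵢ⟩| ≤ ‖g‖ ( δ‖K*‖ⁿ + ε Σᵢ |cᵢ| Σ_{j=1}^{n} |λᵢ|^{n−j} ‖K*‖^{j−1} ). -/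
open Finset

lemma pf_aux {H : Type*} [NormedAddCommGroup H] [InnerProductSpace ℂ H]
    (A : H →L[ℂ] H) (ψ : H) (lam : ℂ) (ε : ℝ)
    (h : ‖A ψ - lam • ψ‖ ≤ ε) (n : ℕ) :
    ‖(A ^ n) ψ - lam ^ n • ψ‖ ≤
      ε * ∑ k ∈ Finset.range n, ‖lam‖ ^ (n - 1 - k) * ‖A‖ ^ k := by
  induction n with
  | zero => simp
  | succ n ih =>
    have key : (A ^ (n+1)) ψ - lam ^ (n+1) • ψ
        = A ((A ^ n) ψ - lam ^ n • ψ) + lam ^ n • (A ψ - lam • ψ) := by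
      rw [pow_succ', ContinuousLinearMap.mul_apply, map_sub, map_smul, smul_sub, smul_smul,
        ← pow_succ]
      abel
    have h1 : ‖A ((A ^ n) ψ - lam ^ n • ψ)‖ ≤ ‖A‖ * (ε * ∑ k ∈ Finset.range n,
        ‖lam‖ ^ (n - 1 - k) * ‖A‖ ^ k) :=
      le_trans (A.le_opNorm _) (mul_le_mul_of_nonneg_left ih (norm_nonneg A))
    have h2 : ‖lam ^ n • (A ψ - lam • ψ)‖ ≤ ‖lam‖ ^ n * ε := by
      rw [norm_smul, norm_pow]
      exact mul_le_mul_of_nonneg_left h (pow_nonneg (norm_nonneg _) n)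
    have hsum : ∑ k ∈ Finset.range (n+1), ‖lam‖ ^ (n + 1 - 1 - k) * ‖A‖ ^ k
        = ‖A‖ * ∑ k ∈ Finset.range n, ‖lam‖ ^ (n - 1 - k) * ‖A‖ ^ k
          + ‖lam‖ ^ n := by
      rw [Finset.sum_range_succ', Finset.mul_sum]
      simp only [Nat.add_sub_cancel, Nat.sub_zero, pow_zero, mul_one, pow_succ]
      congr 1
      apply Finset.sum_congr rfl
      intro k hk
      have : n - (k + 1) = n - 1 - k := by omega
      rw [this]; ring
    calc ‖(A ^ (n+1)) ψ - lam ^ (n+1) • ψ‖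
        ≤ ‖A ((A ^ n) ψ - lam ^ n • ψ)‖ + ‖lam ^ n • (A ψ - lam • ψ)‖ := by
          rw [key]; exact norm_add_le _ _
      _ ≤ ‖A‖ * (ε * ∑ k ∈ Finset.range n, ‖lam‖ ^ (n - 1 - k) * ‖A‖ ^ k)
          + ‖lam‖ ^ n * ε := add_le_add h1 h2
      _ = ε * ∑ k ∈ Finset.range (n+1), ‖lam‖ ^ (n + 1 - 1 - k) * ‖A‖ ^ k := by
          rw [hsum]; ring

lemma pf_pow_apply_le {H : Type*} [NormedAddCommGroup H] [InnerProductSpace ℂ H]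
    (A : H →L[ℂ] H) (n : ℕ) (w : H) : ‖(A ^ n) w‖ ≤ ‖A‖ ^ n * ‖w‖ := by
  induction n with
  | zero => simp
  | succ n ih =>
    rw [pow_succ', ContinuousLinearMap.mul_apply]
    calc ‖A ((A ^ n) w)‖ ≤ ‖A‖ * ‖(A ^ n) w‖ := A.le_opNorm _
      _ ≤ ‖A‖ * (‖A‖ ^ n * ‖w‖) := mul_le_mul_of_nonneg_left ih (norm_nonneg A)
      _ = ‖A‖ ^ (n + 1) * ‖w‖ := by ring



/-- Let `H` be an RKHS on `X` with kernel functions `K x`, `F : X → X`,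
and let `A` be the bounded Perron–Frobenius operator (`A (K x) = K (F x)`, the adjoint of
the Koopman operator). Suppose `‖(A − λᵢ)ψᵢ‖ ≤ ε` for `i = 1, …, m` and
`‖K x₀ − Σᵢ cᵢ ψᵢ‖ ≤ δ`. Then for any `g ∈ H` and `n ∈ ℕ`,
`|g(Fⁿ x₀) − Σᵢ c̄ᵢ λ̄ᵢⁿ ⟨g, ψᵢ⟩| ≤ ‖g‖ (δ ‖A‖ⁿ + ε Σᵢ |cᵢ| Σ_{j=1}^n |λᵢ|^{n−j} ‖A‖^{j−1})`. -/
theorem perronFrobenius_mode_decomposition_error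
    (X : Type*) (H : Type*) [NormedAddCommGroup H] [InnerProductSpace ℂ H] [CompleteSpace H]
    (toFun : H →ₗ[ℂ] (X → ℂ))
    (K : X → H)
    (hrep : ∀ (f : H) (x : X), toFun f x = (inner ℂ (K x) f : ℂ))
    (F : X → X)
    (A : H →L[ℂ] H)
    (hA : ∀ x : X, A (K x) = K (F x))
    (m : ℕ) (lam : Fin m → ℂ) (ψ : Fin m → H) (ε δ : ℝ)
    (hψ : ∀ i, ‖A (ψ i) - lam i • ψ i‖ ≤ ε)
    (c : Fin m → ℂ) (x₀ : X)
    (hc : ‖K x₀ - ∑ i, c i • ψ i‖ ≤ δ) :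
    ∀ (g : H) (n : ℕ),
      ‖toFun g (F^[n] x₀) -
          ∑ i, (starRingEnd ℂ) (c i) * ((starRingEnd ℂ) (lam i)) ^ n *
            (inner ℂ (ψ i) g : ℂ)‖ ≤
        ‖g‖ * (δ * ‖A‖ ^ n +
          ε * ∑ i, ‖c i‖ *
            ∑ j ∈ Finset.Icc 1 n, ‖lam i‖ ^ (n - j) * ‖A‖ ^ (j - 1)) := by
  intro g n
  have hAn : ∀ k : ℕ, (A ^ k) (K x₀) = K (F^[k] x₀) := by
    intro k
    induction k with
    | zero => simp
    | succ k ih =>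
      rw [pow_succ', ContinuousLinearMap.mul_apply, ih, hA, Function.iterate_succ_apply']
  have e1 : toFun g (F^[n] x₀) = (inner ℂ ((A ^ n) (K x₀)) g : ℂ) := by
    rw [hrep, hAn]
  have e2 : (∑ i, (starRingEnd ℂ) (c i) * ((starRingEnd ℂ) (lam i)) ^ n *
      (inner ℂ (ψ i) g : ℂ)) = (inner ℂ (∑ i, (c i * lam i ^ n) • ψ i) g : ℂ) := by
    rw [sum_inner]
    apply Finset.sum_congr rfl
    intro i _
    rw [inner_smul_left, map_mul, map_pow]
  set v : H := (A ^ n) (K x₀) - ∑ i, (c i * lam i ^ n) • ψ i with hv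
  have e3 : toFun g (F^[n] x₀) -
      ∑ i, (starRingEnd ℂ) (c i) * ((starRingEnd ℂ) (lam i)) ^ n * (inner ℂ (ψ i) g : ℂ)
      = (inner ℂ v g : ℂ) := by
    rw [e1, e2, hv, ← inner_sub_left]
  have hvdecomp : v = (A ^ n) (K x₀ - ∑ i, c i • ψ i)
      + ∑ i, c i • ((A ^ n) (ψ i) - lam i ^ n • ψ i) := by
    rw [hv, map_sub, map_sum]
    simp only [map_smul, smul_sub, smul_smul, Finset.sum_sub_distrib]
    abel
  have hS : ∀ i : Fin m, (∑ j ∈ Finset.Icc 1 n, ‖lam i‖ ^ (n - j) * ‖A‖ ^ (j - 1))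
      = ∑ k ∈ Finset.range n, ‖lam i‖ ^ (n - 1 - k) * ‖A‖ ^ k := by
    intro i
    apply Finset.sum_nbij' (i := fun j => j - 1) (j := fun k => k + 1)
    · intro a ha; simp only [Finset.mem_Icc] at ha; simp only [Finset.mem_range]; omega
    · intro a ha; simp only [Finset.mem_range] at ha; simp only [Finset.mem_Icc]; omega
    · intro a ha; simp only [Finset.mem_Icc] at ha; omega
    · intro a ha; simp only [Finset.mem_range] at ha; omega
    · intro a ha; simp only [Finset.mem_Icc] at ha
      rw [show n - a = n - 1 - (a - 1) by omega]
  have hnorm : ‖v‖ ≤ δ * ‖A‖ ^ n +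
      ε * ∑ i, ‖c i‖ *
        ∑ j ∈ Finset.Icc 1 n, ‖lam i‖ ^ (n - j) * ‖A‖ ^ (j - 1) := by
    rw [hvdecomp]
    have t1 : ‖(A ^ n) (K x₀ - ∑ i, c i • ψ i)‖ ≤ δ * ‖A‖ ^ n := by
      calc ‖(A ^ n) (K x₀ - ∑ i, c i • ψ i)‖ ≤ ‖A‖ ^ n * ‖K x₀ - ∑ i, c i • ψ i‖ :=
          pf_pow_apply_le A n _
        _ ≤ ‖A‖ ^ n * δ := mul_le_mul_of_nonneg_left hc (pow_nonneg (norm_nonneg A) n)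
        _ = δ * ‖A‖ ^ n := by ring
    have t2 : ‖∑ i, c i • ((A ^ n) (ψ i) - lam i ^ n • ψ i)‖ ≤
        ε * ∑ i, ‖c i‖ *
          ∑ j ∈ Finset.Icc 1 n, ‖lam i‖ ^ (n - j) * ‖A‖ ^ (j - 1) := by
      calc ‖∑ i, c i • ((A ^ n) (ψ i) - lam i ^ n • ψ i)‖
          ≤ ∑ i, ‖c i • ((A ^ n) (ψ i) - lam i ^ n • ψ i)‖ := norm_sum_le _ _
        _ ≤ ∑ i, ‖c i‖ *
            (ε * ∑ k ∈ Finset.range n, ‖lam i‖ ^ (n - 1 - k) * ‖A‖ ^ k) := by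
            apply Finset.sum_le_sum
            intro i _
            rw [norm_smul]
            exact mul_le_mul_of_nonneg_left (pf_aux A (ψ i) (lam i) ε (hψ i) n)
              (norm_nonneg (c i))
        _ = ε * ∑ i, ‖c i‖ *
            ∑ j ∈ Finset.Icc 1 n, ‖lam i‖ ^ (n - j) * ‖A‖ ^ (j - 1) := by
            rw [Finset.mul_sum]
            apply Finset.sum_congr rfl
            intro i _
            rw [hS i]; ring
    calc ‖(A ^ n) (K x₀ - ∑ i, c i • ψ i) + ∑ i, c i • ((A ^ n) (ψ i) - lam i ^ n • ψ i)‖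
        ≤ _ + _ := norm_add_le _ _
      _ ≤ _ := add_le_add t1 t2
  calc ‖toFun g (F^[n] x₀) -
        ∑ i, (starRingEnd ℂ) (c i) * ((starRingEnd ℂ) (lam i)) ^ n * (inner ℂ (ψ i) g : ℂ)‖
      = ‖(inner ℂ v g : ℂ)‖ := by rw [e3]
    _ ≤ ‖v‖ * ‖g‖ := norm_inner_le_norm v g
    _ ≤ (δ * ‖A‖ ^ n + ε * ∑ i, ‖c i‖ *
          ∑ j ∈ Finset.Icc 1 n, ‖lam i‖ ^ (n - j) * ‖A‖ ^ (j - 1)) * ‖g‖ :=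
        mul_le_mul_of_nonneg_right hnorm (norm_nonneg g)
    _ = _ := by ring
end

section
/- Let G, G̃ ∈ ℂ^{n×n} be self-adjoint matrices with eigenvalues λ₁ ≤ ⋯ ≤ λₙ and λ̃₁ ≤ ⋯ ≤ λ̃ₙ respectively (counted with multiplicity). Then |λᵢ − λ̃ᵢ| ≤ ‖G − G̃‖₂ for every i, where ‖·‖₂ is the spectral norm. -/
open Matrix
variable {n : ℕ} {A : Matrix (Fin n) (Fin n) ℂ} (hA : A.IsHermitian)

lemma clm_apply_basis (k : Fin n) :
    toEuclideanCLM (𝕜 := ℂ) A (hA.eigenvectorBasis k) = (hA.eigenvalues k : ℂ) • hA.eigenvectorBasis k := by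
  have h := hA.mulVec_eigenvectorBasis k
  ext j
  have h2 := congrFun (ofLp_toEuclideanCLM A (hA.eigenvectorBasis k)) j
  rw [h2]
  have h3 := congrFun h j
  simpa [Complex.real_smul] using h3

lemma selfadj (hA : A.IsHermitian) : _root_.IsSelfAdjoint (toEuclideanCLM (𝕜 := ℂ) A) := by
  have : star A = A := hA
  rw [_root_.IsSelfAdjoint, ← map_star, this]

lemma repr_clm (x : EuclideanSpace ℂ (Fin n)) (k : Fin n) :
    hA.eigenvectorBasis.repr (toEuclideanCLM (𝕜 := ℂ) A x) k
      = (hA.eigenvalues k : ℂ) * hA.eigenvectorBasis.repr x k := by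
  rw [OrthonormalBasis.repr_apply_apply, OrthonormalBasis.repr_apply_apply,
    ← ContinuousLinearMap.adjoint_inner_left, (selfadj hA).adjoint_eq,
    clm_apply_basis hA k, inner_smul_left]
  simp

lemma re_inner_clm (x : EuclideanSpace ℂ (Fin n)) :
    Complex.re (inner ℂ x (toEuclideanCLM (𝕜 := ℂ) A x))
      = ∑ k, hA.eigenvalues k * ‖hA.eigenvectorBasis.repr x k‖^2 := by
  rw [← hA.eigenvectorBasis.repr.inner_map_map x (toEuclideanCLM (𝕜 := ℂ) A x)]
  rw [PiLp.inner_apply]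
  rw [Complex.re_sum]
  congr 1
  ext k
  rw [repr_clm hA x k]
  simp only [RCLike.inner_apply]
  set c := hA.eigenvectorBasis.repr x k
  rw [show (hA.eigenvalues k : ℂ) * c * (starRingEnd ℂ) c = (hA.eigenvalues k : ℂ) * ((starRingEnd ℂ) c * c) by ring]
  rw [Complex.conj_mul']
  simp [← Complex.ofReal_pow]

lemma norm_sq_repr (x : EuclideanSpace ℂ (Fin n)) :
    ‖x‖^2 = ∑ k, ‖hA.eigenvectorBasis.repr x k‖^2 := by
  rw [← hA.eigenvectorBasis.repr.norm_map x, EuclideanSpace.norm_eq,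
    Real.sq_sqrt (by positivity)]

lemma repr_eq_zero_of_mem_span {S : Set (Fin n)} {x : EuclideanSpace ℂ (Fin n)}
    (hx : x ∈ Submodule.span ℂ (hA.eigenvectorBasis '' S)) {k : Fin n} (hk : k ∉ S) :
    hA.eigenvectorBasis.repr x k = 0 := by
  rw [OrthonormalBasis.repr_apply_apply]
  have : Submodule.span ℂ (hA.eigenvectorBasis '' S) ≤ LinearMap.ker ((innerSL ℂ (hA.eigenvectorBasis k)).toLinearMap) := by
    rw [Submodule.span_le]
    rintro _ ⟨j, hj, rfl⟩
    simp only [SetLike.mem_coe, LinearMap.mem_ker, ContinuousLinearMap.coe_coe, innerSL_apply_apply]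
    exact hA.eigenvectorBasis.orthonormal.2 (fun h => hk (h ▸ hj))
  exact this hx

theorem sort_eq (n : ℕ) (μ ν : Fin n → ℝ) (h : Multiset.map μ Finset.univ.val = Multiset.map ν Finset.univ.val)
    (hμ : Monotone μ) : μ = ν ∘ Tuple.sort ν := by
  have h2 : List.Perm (List.ofFn μ) <| List.ofFn (ν ∘ Tuple.sort ν) := by
    rw [← Multiset.coe_eq_coe]
    calc (↑(List.ofFn μ) : Multiset ℝ) = Multiset.map μ Finset.univ.val := (Fin.univ_val_map μ).symm
    _ = Multiset.map ν Finset.univ.val := h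
    _ = ↑(List.ofFn ν) := Fin.univ_val_map ν
    _ = ↑(List.ofFn (ν ∘ Tuple.sort ν)) := (Multiset.coe_eq_coe.2 ((Tuple.sort ν).ofFn_comp_perm ν)).symm
  exact List.ofFn_injective (List.Perm.eq_of_sortedLE hμ.sortedLE_ofFn (Tuple.monotone_sort ν).sortedLE_ofFn h2)

lemma card_le_subtype (n : ℕ) (i : Fin n) : Fintype.card {j : Fin n // j ≤ i} = i + 1 := by
  rw [Fintype.card_subtype, ← Fin.card_Iic i]; congr 1; ext j; simp

lemma card_ge_subtype (n : ℕ) (i : Fin n) : Fintype.card {j : Fin n // i ≤ j} = n - i := by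
  rw [Fintype.card_subtype, ← Fin.card_Ici i]; congr 1; ext j; simp

lemma weyl_one_sided (n : ℕ) (G G' : Matrix (Fin n) (Fin n) ℂ)
    (hG : G.IsHermitian) (hG' : G'.IsHermitian)
    (μ μ' : Fin n → ℝ) (hμmono : Monotone μ) (hμ'mono : Monotone μ')
    (hμ : Multiset.map μ Finset.univ.val = Multiset.map hG.eigenvalues Finset.univ.val)
    (hμ' : Multiset.map μ' Finset.univ.val = Multiset.map hG'.eigenvalues Finset.univ.val)
    (i : Fin n) :
    μ i ≤ μ' i + ‖Matrix.toEuclideanCLM (𝕜 := ℂ) (G - G')‖ := by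
  classical
  set ε := ‖Matrix.toEuclideanCLM (𝕜 := ℂ) (G - G')‖ with hε
  set σ := Tuple.sort hG.eigenvalues
  set σ' := Tuple.sort hG'.eigenvalues
  have hμeq : μ = hG.eigenvalues ∘ σ := sort_eq n μ _ hμ hμmono
  have hμ'eq : μ' = hG'.eigenvalues ∘ σ' := sort_eq n μ' _ hμ' hμ'mono
  set b := hG.eigenvectorBasis
  set b' := hG'.eigenvectorBasis
  -- index families
  set g : {j : Fin n // i ≤ j} → Fin n := fun j => σ j
  set g' : {j : Fin n // j ≤ i} → Fin n := fun j => σ' j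
  have hginj : Function.Injective g := fun a c h => Subtype.ext (σ.injective h)
  have hg'inj : Function.Injective g' := fun a c h => Subtype.ext (σ'.injective h)
  set W := Submodule.span ℂ (Set.range (b ∘ g))
  set V := Submodule.span ℂ (Set.range (b' ∘ g'))
  -- dimensions
  have hWdim : Module.finrank ℂ W = n - i := by
    rw [finrank_span_eq_card ((b.orthonormal.comp g hginj).linearIndependent), card_ge_subtype]
  have hVdim : Module.finrank ℂ V = i + 1 := by
    rw [finrank_span_eq_card ((b'.orthonormal.comp g' hg'inj).linearIndependent), card_le_subtype]
  -- intersection nonzero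
  have hbot : V ⊓ W ≠ ⊥ := by
    intro hb
    have hsum := Submodule.finrank_sup_add_finrank_inf_eq V W
    rw [hb, hVdim, hWdim] at hsum
    have h1 : Module.finrank ℂ ↥(V ⊔ W) ≤ n := by
      have := Submodule.finrank_le (V ⊔ W)
      simpa [finrank_euclideanSpace_fin] using this
    have h2 : (i : ℕ) < n := i.isLt
    simp only [finrank_bot] at hsum
    omega
  obtain ⟨x, hx, hx0⟩ := Submodule.exists_mem_ne_zero_of_ne_bot hbot
  have hxV : x ∈ V := hx.1
  have hxW : x ∈ W := hx.2
  have hxn : (0:ℝ) < ‖x‖^2 := by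
    have := norm_pos_iff.mpr hx0
    positivity
  -- ranges as images
  have hrW : Set.range (b ∘ g) = b '' Set.range g := Set.range_comp b g
  have hrV : Set.range (b' ∘ g') = b' '' Set.range g' := Set.range_comp b' g'
  -- upper bound on V
  have hup : Complex.re (inner ℂ x (Matrix.toEuclideanCLM (𝕜 := ℂ) G' x)) ≤ μ' i * ‖x‖^2 := by
    rw [re_inner_clm hG' x, norm_sq_repr hG' x, Finset.mul_sum]
    apply Finset.sum_le_sum
    intro k _
    by_cases hk : k ∈ Set.range g'
    · obtain ⟨j, rfl⟩ := hk
      have : hG'.eigenvalues (g' j) ≤ μ' i := by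
        calc hG'.eigenvalues (g' j) = μ' j.1 := by rw [hμ'eq]; rfl
        _ ≤ μ' i := hμ'mono j.2
      exact mul_le_mul_of_nonneg_right this (by positivity)
    · have : hG'.eigenvectorBasis.repr x k = 0 :=
        repr_eq_zero_of_mem_span hG' (by rwa [← hrV]) hk
      simp [this]
  -- lower bound on W
  have hlo : μ i * ‖x‖^2 ≤ Complex.re (inner ℂ x (Matrix.toEuclideanCLM (𝕜 := ℂ) G x)) := by
    rw [re_inner_clm hG x, norm_sq_repr hG x, Finset.mul_sum]
    apply Finset.sum_le_sum
    intro k _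
    by_cases hk : k ∈ Set.range g
    · obtain ⟨j, rfl⟩ := hk
      have : μ i ≤ hG.eigenvalues (g j) := by
        calc μ i ≤ μ j.1 := hμmono j.2
        _ = hG.eigenvalues (g j) := by rw [hμeq]; rfl
      exact mul_le_mul_of_nonneg_right this (by positivity)
    · have : hG.eigenvectorBasis.repr x k = 0 :=
        repr_eq_zero_of_mem_span hG (by rwa [← hrW]) hk
      simp [this]
  -- perturbation bound
  have hpert : Complex.re (inner ℂ x (Matrix.toEuclideanCLM (𝕜 := ℂ) G x))
      - Complex.re (inner ℂ x (Matrix.toEuclideanCLM (𝕜 := ℂ) G' x)) ≤ ε * ‖x‖^2 := by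
    have heq : Complex.re (inner ℂ x (Matrix.toEuclideanCLM (𝕜 := ℂ) G x))
        - Complex.re (inner ℂ x (Matrix.toEuclideanCLM (𝕜 := ℂ) G' x))
        = Complex.re (inner ℂ x (Matrix.toEuclideanCLM (𝕜 := ℂ) (G - G') x)) := by
      rw [map_sub]
      simp [inner_sub_right]
    rw [heq]
    calc Complex.re (inner ℂ x (Matrix.toEuclideanCLM (𝕜 := ℂ) (G - G') x))
        ≤ ‖(inner ℂ x (Matrix.toEuclideanCLM (𝕜 := ℂ) (G - G') x) : ℂ)‖ := by
          exact (le_abs_self _).trans (Complex.abs_re_le_norm _)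
      _ ≤ ‖x‖ * ‖Matrix.toEuclideanCLM (𝕜 := ℂ) (G - G') x‖ := norm_inner_le_norm _ _
      _ ≤ ‖x‖ * (ε * ‖x‖) := by
          exact mul_le_mul_of_nonneg_left ((Matrix.toEuclideanCLM (𝕜 := ℂ) (G - G')).le_opNorm x) (norm_nonneg x)
      _ = ε * ‖x‖^2 := by ring
  -- combine
  have : μ i * ‖x‖^2 ≤ (μ' i + ε) * ‖x‖^2 := by nlinarith
  exact le_of_mul_le_mul_right (by linarith [this]) hxn

/-- **Weyl's perturbation inequality.** Let `G, G'` be self-adjoint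
`n × n` complex matrices with eigenvalues `μ₁ ≤ ⋯ ≤ μₙ` and `μ'₁ ≤ ⋯ ≤ μ'ₙ`
(counted with multiplicity). Then `|μᵢ − μ'ᵢ| ≤ ‖G − G'‖₂` for every `i`, where
`‖·‖₂` is the spectral (operator) norm. -/
theorem weyl_eigenvalue_perturbation
    (n : ℕ) (G G' : Matrix (Fin n) (Fin n) ℂ)
    (hG : G.IsHermitian) (hG' : G'.IsHermitian)
    (μ μ' : Fin n → ℝ) (hμmono : Monotone μ) (hμ'mono : Monotone μ')
    (hμ : Multiset.map μ Finset.univ.val = Multiset.map hG.eigenvalues Finset.univ.val)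
    (hμ' : Multiset.map μ' Finset.univ.val = Multiset.map hG'.eigenvalues Finset.univ.val) :
    ∀ i : Fin n, |μ i - μ' i| ≤ ‖Matrix.toEuclideanCLM (𝕜 := ℂ) (G - G')‖ := by
  intro i
  have h1 := weyl_one_sided n G G' hG hG' μ μ' hμmono hμ'mono hμ hμ' i
  have h2 := weyl_one_sided n G' G hG' hG μ' μ hμ'mono hμmono hμ' hμ i
  have hnorm : ‖Matrix.toEuclideanCLM (𝕜 := ℂ) (G' - G)‖ = ‖Matrix.toEuclideanCLM (𝕜 := ℂ) (G - G')‖ := by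
    rw [show G' - G = -(G - G') by rw [neg_sub], map_neg, norm_neg]
  rw [hnorm] at h2
  rw [abs_sub_le_iff]
  constructor <;> linarith
end

section
/- Let F : (−1, 0) → (−1, 0) be the Gauss iterated map F(x) = exp(−2x²) − 1 − exp(−2). Then the Koopman operator g ↦ g ∘ F is unbounded on L²((−1,0)): for every M > 0 there exists g ∈ L²((−1,0)) with ‖g‖_{L²} = 1 and ‖g ∘ F‖_{L²} > M. -/
set_option maxHeartbeats 1000000

open MeasureTheory

open Set in
private lemma aux_lb {h : ℝ → ℝ} {a b c : ℝ}
    (hab : Ioo a b ⊆ Ioo (-1 : ℝ) 0) (hc : 0 ≤ c)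
    (hint : IntegrableOn h (Ioo (-1 : ℝ) 0))
    (h0 : ∀ x, 0 ≤ h x)
    (hge : ∀ x ∈ Ioo a b, c ≤ h x) :
    c * (b - a) ≤ ∫ x in Ioo (-1 : ℝ) 0, h x := by
  rcases le_or_gt b a with hba | hba
  · have h1 : c * (b - a) ≤ 0 := mul_nonpos_of_nonneg_of_nonpos hc (by linarith)
    exact h1.trans (setIntegral_nonneg measurableSet_Ioo fun x _ => h0 x)
  · have h1 : c * (b - a) = ∫ _x in Ioo a b, c := by
      rw [setIntegral_const, measureReal_def, Real.volume_Ioo, smul_eq_mul,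
        ENNReal.toReal_ofReal (by linarith)]
      ring
    have h2 : (∫ _x in Ioo a b, c) ≤ ∫ x in Ioo a b, h x :=
      setIntegral_mono_on (integrableOn_const measure_Ioo_lt_top.ne)
        (hint.mono_set hab) measurableSet_Ioo hge
    have h3 : (∫ x in Ioo a b, h x) ≤ ∫ x in Ioo (-1:ℝ) 0, h x :=
      setIntegral_mono_set hint (Filter.Eventually.of_forall h0)
        (HasSubset.Subset.eventuallyLE hab)
    linarith

open Set in
private lemma aux_ub {h : ℝ → ℝ} {a b : ℝ} (hab : a ≤ b)
    (hint : IntegrableOn h (Ioo (-1 : ℝ) 0))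
    (hbd : ∀ x, h x ≤ (Icc a b).indicator (fun _ => (1:ℝ)) x) :
    ∫ x in Ioo (-1 : ℝ) 0, h x ≤ b - a := by
  have hind : IntegrableOn ((Icc a b).indicator (fun _ => (1:ℝ))) (Ioo (-1:ℝ) 0) := by
    refine ((integrable_indicator_iff measurableSet_Icc).2 ?_).integrableOn
    exact integrableOn_const measure_Icc_lt_top.ne
  have h2 : (∫ x in Ioo (-1:ℝ) 0, h x)
      ≤ ∫ x in Ioo (-1:ℝ) 0, (Icc a b).indicator (fun _ => (1:ℝ)) x :=
    setIntegral_mono_on hint hind measurableSet_Ioo (fun x _ => hbd x)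
  rw [setIntegral_indicator measurableSet_Icc, setIntegral_const, smul_eq_mul, mul_one] at h2
  refine h2.trans ?_
  have hm : volume (Ioo (-1:ℝ) 0 ∩ Icc a b) ≤ volume (Icc a b) :=
    measure_mono inter_subset_right
  have := ENNReal.toReal_mono measure_Icc_lt_top.ne hm
  rwa [Real.volume_Icc, ENNReal.toReal_ofReal (by linarith)] at this

/-- Let `F : (−1,0) → (−1,0)` be the Gauss iterated map
`F(x) = exp(−2x²) − 1 − exp(−2)`. Then the Koopman operator `g ↦ g ∘ F` is unbounded on
`L²((−1,0))`: for every `M > 0` there exists `g` with `‖g‖_{L²} = 1` and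
`‖g ∘ F‖_{L²} > M`. -/
theorem gauss_map_koopman_unbounded_on_L2
    (F : ℝ → ℝ)
    (hF : ∀ x : ℝ, F x = Real.exp (-2 * x ^ 2) - 1 - Real.exp (-2)) :
    ∀ M : ℝ, 0 < M → ∃ g : ℝ → ℝ, Continuous g ∧
      (∫ x in Set.Ioo (-1 : ℝ) 0, (g x) ^ 2) = 1 ∧
      M < Real.sqrt (∫ x in Set.Ioo (-1 : ℝ) 0, (g (F x)) ^ 2) := by
  intro M hM
  have hFc : Continuous F := by
    have : F = fun x => Real.exp (-2 * x ^ 2) - 1 - Real.exp (-2) := funext hF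
    rw [this]; continuity
  -- basic bounds on e2 = exp(-2)
  set e2 : ℝ := Real.exp (-2) with he2def
  have he2pos : 0 < e2 := Real.exp_pos _
  have hexp2 : e2 * Real.exp 2 = 1 := by
    rw [he2def, ← Real.exp_add]; norm_num
  have hexp2lb : (4:ℝ) < Real.exp 2 := by
    have h1 := Real.exp_one_gt_d9
    have h2 : Real.exp 2 = Real.exp 1 * Real.exp 1 := by
      rw [← Real.exp_add]; norm_num
    nlinarith
  have hexp2ub : Real.exp 2 < 8 := by
    have h1 := Real.exp_one_lt_d9
    have h0 := Real.exp_pos 1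
    have h2 : Real.exp 2 = Real.exp 1 * Real.exp 1 := by
      rw [← Real.exp_add]; norm_num
    nlinarith
  have he2lt : e2 < 1/4 := by nlinarith
  have he2gt : 1/8 < e2 := by nlinarith
  set u0 : ℝ := -e2 with hu0def
  -- the small parameter δ
  set δ : ℝ := min (1/16) ((512 * M ^ 4)⁻¹) with hδdef
  have hδpos : 0 < δ := lt_min (by norm_num) (by positivity)
  have hδle : δ ≤ 1/16 := min_le_left _ _
  have hδle2 : δ ≤ (512 * M ^ 4)⁻¹ := min_le_right _ _
  set s : ℝ := Real.sqrt δ with hsdef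
  have hspos : 0 < s := Real.sqrt_pos.2 hδpos
  have hs2 : s ^ 2 = δ := Real.sq_sqrt hδpos.le
  have hsle1 : s ≤ 1 := Real.sqrt_le_one.2 (by linarith)
  -- the bump function
  set f : ℝ → ℝ := fun u => max 0 (1 - |u - u0| / δ) with hfdef
  have hfc : Continuous f := by
    apply continuous_const.max
    exact continuous_const.sub ((continuous_abs.comp (continuous_id.sub continuous_const)).div_const δ)
  have hf0 : ∀ u, 0 ≤ f u := fun u => le_max_left _ _
  have hf1 : ∀ u, f u ≤ 1 := by
    intro u
    have : 0 ≤ |u - u0| / δ := div_nonneg (abs_nonneg _) hδpos.le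
    exact max_le (by norm_num) (by linarith)
  -- integrability
  have hIf : IntegrableOn (fun x => f x ^ 2) (Set.Ioo (-1:ℝ) 0) :=
    ((hfc.pow 2).integrableOn_Icc (a := -1) (b := 0)).mono_set Set.Ioo_subset_Icc_self
  have hIfF : IntegrableOn (fun x => f (F x) ^ 2) (Set.Ioo (-1:ℝ) 0) :=
    (((hfc.comp hFc).pow 2).integrableOn_Icc (a := -1) (b := 0)).mono_set Set.Ioo_subset_Icc_self
  set I : ℝ := ∫ x in Set.Ioo (-1:ℝ) 0, f x ^ 2 with hIdef
  set J : ℝ := ∫ x in Set.Ioo (-1:ℝ) 0, f (F x) ^ 2 with hJdef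
  -- lower bound for I
  have hIlb : (1/4 : ℝ) * δ ≤ I := by
    have := aux_lb (h := fun x => f x ^ 2) (a := u0 - δ/2) (b := u0 + δ/2) (c := 1/4)
      (Set.Ioo_subset_Ioo (by simp only [hu0def]; linarith) (by simp only [hu0def]; linarith))
      (by norm_num) hIf (fun x => sq_nonneg _) ?_
    · linarith [this]
    · intro x hx
      have habs : |x - u0| ≤ δ / 2 := by
        rw [abs_le]; constructor <;> [linarith [hx.1]; linarith [hx.2]]
      have h1 : (1:ℝ)/2 ≤ 1 - |x - u0| / δ := by
        have : |x - u0| / δ ≤ 1/2 := by rw [div_le_iff₀ hδpos]; linarith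
        linarith
      have h2 : (1:ℝ)/2 ≤ f x := le_trans h1 (le_max_right _ _)
      nlinarith
  have hIpos : 0 < I := lt_of_lt_of_le (by linarith) hIlb
  -- upper bound for I
  have hIub : I ≤ 2 * δ := by
    have := aux_ub (h := fun x => f x ^ 2) (a := u0 - δ) (b := u0 + δ) (by linarith) hIf ?_
    · linarith [this]
    · intro x
      by_cases hx : x ∈ Set.Icc (u0 - δ) (u0 + δ)
      · rw [Set.indicator_of_mem hx]
        show f x ^ 2 ≤ 1
        nlinarith [hf0 x, hf1 x, sq_nonneg (1 - f x)]
      · rw [Set.indicator_of_notMem hx]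
        have habs : δ ≤ |x - u0| := by
          rw [Set.mem_Icc, not_and_or] at hx
          rcases hx with hx | hx <;> push_neg at hx <;>
            [rw [abs_of_nonpos (by linarith)]; rw [abs_of_nonneg (by linarith)]] <;> linarith
        have : f x = 0 := by
          apply max_eq_left
          have : 1 ≤ |x - u0| / δ := (one_le_div hδpos).2 habs
          linarith
        show f x ^ 2 ≤ 0
        rw [this]; norm_num
  -- lower bound for J
  have hJlb : s / 8 ≤ J := by
    have := aux_lb (h := fun x => f (F x) ^ 2) (a := -(s/2)) (b := 0) (c := 1/4)
      (Set.Ioo_subset_Ioo (by linarith) le_rfl) (by norm_num) hIfF (fun x => sq_nonneg _) ?_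
    · linarith [this]
    · intro x hx
      have hx2 : x ^ 2 ≤ δ / 4 := by
        have h1 : |x| ≤ s / 2 := by
          rw [abs_le]; exact ⟨by linarith [hx.1], by linarith [hx.2]⟩
        have := sq_abs x
        nlinarith [abs_nonneg x]
      have hFx : F x - u0 = Real.exp (-2 * x ^ 2) - 1 := by rw [hF x]; simp only [hu0def, he2def]; ring
      have hle : Real.exp (-2 * x ^ 2) ≤ 1 := Real.exp_le_one_iff.2 (by nlinarith [sq_nonneg x])
      have hge : 1 - 2 * x ^ 2 ≤ Real.exp (-2 * x ^ 2) := by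
        have := Real.add_one_le_exp (-2 * x ^ 2); linarith
      have habs : |F x - u0| ≤ δ / 2 := by
        rw [hFx, abs_of_nonpos (by linarith)]; linarith
      have h1 : (1:ℝ)/2 ≤ 1 - |F x - u0| / δ := by
        have : |F x - u0| / δ ≤ 1/2 := by rw [div_le_iff₀ hδpos]; linarith
        linarith
      have h2 : (1:ℝ)/2 ≤ f (F x) := le_trans h1 (le_max_right _ _)
      nlinarith
  -- the normalized function
  set c : ℝ := (Real.sqrt I)⁻¹ with hcdef
  have hsqI : Real.sqrt I > 0 := Real.sqrt_pos.2 hIpos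
  have hc2 : c ^ 2 = I⁻¹ := by
    rw [hcdef, inv_pow, Real.sq_sqrt hIpos.le]
  refine ⟨fun x => c * f x, continuous_const.mul hfc, ?_, ?_⟩
  · have : (∫ x in Set.Ioo (-1:ℝ) 0, (c * f x) ^ 2)
        = c ^ 2 * I := by
      rw [hIdef]
      rw [← MeasureTheory.integral_const_mul]
      congr 1; funext x; ring
    rw [this, hc2, inv_mul_cancel₀ hIpos.ne']
  · have heq : (∫ x in Set.Ioo (-1:ℝ) 0, (c * f (F x)) ^ 2) = c ^ 2 * J := by
      rw [hJdef, ← MeasureTheory.integral_const_mul]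
      congr 1; funext x; ring
    rw [heq, hc2]
    rw [Real.lt_sqrt hM.le]
    -- key numeric estimate
    have hMs : 16 * M ^ 2 * s < 1 := by
      have h1 : δ * (512 * M ^ 4) ≤ 1 := by
        rw [← le_div_iff₀ (by positivity)] at *
        calc δ ≤ (512 * M ^ 4)⁻¹ := hδle2
          _ = 1 / (512 * M ^ 4) := by rw [one_div]
      nlinarith [sq_nonneg (16 * M ^ 2 * s - 1), sq_nonneg M, hspos.le, sq_nonneg s]
    have hstep1 : M ^ 2 < 1 / (16 * s) := by
      rw [lt_div_iff₀ (by positivity)]; linarith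
    have hstep2 : (1:ℝ) / (16 * s) = (2 * δ)⁻¹ * (s / 8) := by
      rw [← hs2]; field_simp; ring
    have hstep3 : (2 * δ)⁻¹ * (s / 8) ≤ I⁻¹ * J := by
      have h1 : (2 * δ)⁻¹ ≤ I⁻¹ := inv_anti₀ hIpos (by linarith)
      have h2 : (0:ℝ) ≤ s / 8 := by positivity
      exact mul_le_mul h1 hJlb h2 (by positivity)
    linarith
end
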